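/- arXiv:math/0401196 — 3 statements merged into one kernel-verified Lean document; each statement's English description precedes it below -/
import Mathlib

section
/- Let [a,b] be a closed bounded interval, X a Banach space, and f : [a,b] → X a Bochner integrable function. Then there exists a sequence of subdivisions a = t_k^0 < t_k^1 < ... < t_k^{i_k} = b of [a,b], whose mesh size max_i (t_k^i - t_k^{i-1}) tends to 0 as k → ∞, such that the sums ∑_{i=1}^{i_k} ∫_{t_k^{i-1}}^{t_k^i} ‖f(t_k^i) - f(t)‖ dt tend to 0 as k → ∞. -/
open MeasureTheory Set Filter Topology

lemma avg_point (φ : ℝ → ℝ) (c d : ℝ) (hcd : c < d)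
    (hφ : IntegrableOn φ (Set.Ioc c d) volume) :
    ∃ x ∈ Set.Ioc c d, φ x * (d - c) ≤ ∫ s in Set.Ioc c d, φ s := by
  have hvol : volume (Set.Ioc c d) = ENNReal.ofReal (d - c) := Real.volume_Ioc
  have h0 : volume (Set.Ioc c d) ≠ 0 := by
    rw [hvol]; simp [ENNReal.ofReal_eq_zero]; linarith
  have htop : volume (Set.Ioc c d) ≠ ⊤ := by rw [hvol]; exact ENNReal.ofReal_ne_top
  obtain ⟨x, hx, hle⟩ := exists_le_setAverage h0 htop hφ
  refine ⟨x, hx, ?_⟩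
  rw [setAverage_eq, measureReal_def, hvol, ENNReal.toReal_ofReal (by linarith)] at hle
  have hd : 0 < d - c := by linarith
  rw [smul_eq_mul] at hle
  calc φ x * (d - c) ≤ (d - c)⁻¹ * (∫ s in Set.Ioc c d, φ s) * (d - c) := by
        apply mul_le_mul_of_nonneg_right hle hd.le
    _ = ∫ s in Set.Ioc c d, φ s := by field_simp

set_option maxHeartbeats 1000000 in
lemma key {X : Type*} [NormedAddCommGroup X] [NormedSpace ℝ X]
    (a b : ℝ) (hab : a < b) (f : ℝ → X)
    (hf : IntegrableOn f (Set.Icc a b) volume) {ε : ℝ} (hε : 0 < ε) :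
    ∃ (n : ℕ) (t : ℕ → ℝ), 1 ≤ n ∧ t 0 = a ∧ t n = b ∧
      (∀ i < n, t i < t (i + 1)) ∧
      (∀ i < n, t (i + 1) - t i < ε) ∧
      (∑ i ∈ Finset.range n, ∫ s in Set.Ioc (t i) (t (i + 1)), ‖f (t (i + 1)) - f s‖) < ε := by
  classical
  set F : ℝ → X := (Set.Icc a b).indicator f with hFdef
  have hF : Integrable F volume := (integrable_indicator_iff measurableSet_Icc).2 hf
  obtain ⟨g, g_cs, hg_close, g_cont, g_int⟩ :=
    hF.exists_hasCompactSupport_integral_sub_le (ε := ε / 16) (by positivity)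
  set φ : ℝ → ℝ := fun x => ‖F x - g x‖ with hφdef
  have hφ_int : Integrable φ volume := (hF.sub g_int).norm
  have hφ_nn : ∀ x, 0 ≤ φ x := fun x => norm_nonneg _
  -- uniform continuity of g on Icc a b
  have hunif := (isCompact_Icc (a := a) (b := b)).uniformContinuousOn_of_continuous
    g_cont.continuousOn
  obtain ⟨δ, hδ, hgδ⟩ := Metric.uniformContinuousOn_iff.1 hunif (ε / (4 * (b - a)))
    (div_pos hε (by linarith))
  -- choose n
  set C : ℝ := ‖f b - g b‖ with hC
  have hC0 : 0 ≤ C := norm_nonneg _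
  set D : ℝ := min (min (ε / 2) (δ / 2)) (ε / (8 * (C + 1))) with hD
  have hD0 : 0 < D := by
    apply lt_min (lt_min (by positivity) (by positivity))
    positivity
  obtain ⟨n, hn⟩ := exists_nat_gt ((b - a) / D)
  have hba : 0 < b - a := by linarith
  have hn0 : 0 < (n : ℝ) := lt_trans (by positivity) hn
  have hn1 : 1 ≤ n := by exact_mod_cast hn0
  set h : ℝ := (b - a) / n with hh
  have hh0 : 0 < h := by positivity
  have hhD : h < D := by
    rw [hh, div_lt_iff₀ hn0]
    calc b - a = ((b - a) / D) * D := by field_simp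
      _ < n * D := mul_lt_mul_of_pos_right hn hD0
      _ = D * n := mul_comm _ _
  have hnh : (n : ℝ) * h = b - a := by rw [hh]; field_simp
  have h2ε : 2 * h < ε := by
    have : h < ε / 2 := lt_of_lt_of_le hhD (le_trans (min_le_left _ _) (min_le_left _ _))
    linarith
  have h2δ : 2 * h < δ := by
    have : h < δ / 2 := lt_of_lt_of_le hhD (le_trans (min_le_left _ _) (min_le_right _ _))
    linarith
  have hlast : 2 * h * (C + 1) < ε / 4 := by
    have h1 : h < ε / (8 * (C + 1)) := lt_of_lt_of_le hhD (min_le_right _ _)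
    have h2 : 0 < C + 1 := by linarith
    calc 2 * h * (C + 1) < 2 * (ε / (8 * (C + 1))) * (C + 1) := by
          apply mul_lt_mul_of_pos_right _ h2
          linarith
      _ = ε / 4 := by field_simp; ring
  -- windows and chosen points
  set W : ℕ → Set ℝ := fun i => Set.Ioc (a + i * h - h / 2) (a + i * h) with hW
  have hWchoice : ∀ i : ℕ, ∃ x ∈ W i, φ x * (h / 2) ≤ ∫ s in W i, φ s := by
    intro i
    have := avg_point φ (a + i * h - h / 2) (a + i * h) (by linarith) hφ_int.integrableOn
    rw [show a + (i : ℝ) * h - (a + (i : ℝ) * h - h / 2) = h / 2 by ring] at this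
    exact this
  choose u hu_mem hu_avg using hWchoice
  set t : ℕ → ℝ := fun i => if i = 0 then a else if n ≤ i then b else u i with ht
  have ht0 : t 0 = a := by simp [ht]
  have htn : t n = b := by
    have hn0' : n ≠ 0 := by omega
    simp [ht, hn0']
  -- bounds on t i
  have htbd : ∀ i ≤ n, a + i * h - h / 2 < t i ∧ t i ≤ a + i * h := by
    intro i hi
    rcases Nat.eq_zero_or_pos i with rfl | hi0
    · simp [ht0]; linarith
    rcases eq_or_lt_of_le hi with rfl | hilt
    · rw [htn]
      constructor
      · push_cast [hnh]; linarith
      · push_cast [hnh]; linarith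
    · have : t i = u i := by simp [ht, hi0.ne', Nat.not_le.mpr hilt]
      rw [this]
      exact ⟨(hu_mem i).1, (hu_mem i).2⟩
  have htIcc : ∀ i ≤ n, t i ∈ Set.Icc a b := by
    intro i hi
    obtain ⟨hl, hr⟩ := htbd i hi
    constructor
    · rcases Nat.eq_zero_or_pos i with rfl | hi0
      · rw [ht0]
      · have : (1 : ℝ) ≤ i := by exact_mod_cast hi0
        nlinarith
    · have : (i : ℝ) ≤ n := by exact_mod_cast hi
      nlinarith
  have hmono : ∀ i < n, t i < t (i + 1) := by
    intro i hi
    obtain ⟨_, hr⟩ := htbd i hi.le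
    obtain ⟨hl, _⟩ := htbd (i + 1) hi
    push_cast at hl
    linarith
  have hmesh : ∀ i < n, t (i + 1) - t i ≤ 3 * h / 2 := by
    intro i hi
    obtain ⟨hl, _⟩ := htbd i hi.le
    obtain ⟨_, hr⟩ := htbd (i + 1) hi
    push_cast at hr
    linarith
  have tmono : ∀ j ≤ n, ∀ i ≤ j, t i ≤ t j := by
    intro j hj
    induction j with
    | zero => intro i hi; interval_cases i; rfl
    | succ m ih =>
      intro i hi
      rcases eq_or_lt_of_le hi with rfl | hilt
      · rfl
      · exact le_trans (ih (by omega) i (by omega)) (hmono m (by omega)).le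
  set ε4 : ℝ := ε / (4 * (b - a)) with hε4
  have hsub : ∀ i < n, Set.Ioc (t i) (t (i + 1)) ⊆ Set.Icc a b := by
    intro i hi s hs
    exact ⟨le_trans (htIcc i hi.le).1 hs.1.le, le_trans hs.2 (htIcc (i + 1) hi).2⟩
  have hf_on : ∀ i < n,
      IntegrableOn (fun s => ‖f (t (i + 1)) - f s‖) (Set.Ioc (t i) (t (i + 1))) volume := by
    intro i hi
    exact ((integrableOn_const (C := f (t (i + 1))) measure_Ioc_lt_top.ne).sub
      (hf.mono_set (hsub i hi))).norm
  have hvolIoc : ∀ i < n,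
      (volume (Set.Ioc (t i) (t (i + 1)))).toReal = t (i + 1) - t i := by
    intro i hi
    rw [Real.volume_Ioc, ENNReal.toReal_ofReal (by linarith [hmono i hi])]
  have hterm : ∀ i < n,
      (∫ s in Set.Ioc (t i) (t (i + 1)), ‖f (t (i + 1)) - f s‖)
        ≤ (t (i + 1) - t i) * ‖f (t (i + 1)) - g (t (i + 1))‖ + (t (i + 1) - t i) * ε4
          + ∫ s in Set.Ioc (t i) (t (i + 1)), φ s := by
    intro i hi
    have hq : t (i + 1) ∈ Set.Icc a b := htIcc (i + 1) hi
    have hbd : ∀ s ∈ Set.Ioc (t i) (t (i + 1)),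
        ‖f (t (i + 1)) - f s‖ ≤ (‖f (t (i + 1)) - g (t (i + 1))‖ + ε4) + φ s := by
      intro s hs
      have hsI : s ∈ Set.Icc a b := hsub i hi hs
      have h1 : ‖f (t (i + 1)) - f s‖ ≤ ‖f (t (i + 1)) - g (t (i + 1))‖
          + ‖g (t (i + 1)) - g s‖ + ‖g s - f s‖ := by
        have heq : f (t (i + 1)) - f s
            = (f (t (i + 1)) - g (t (i + 1))) + ((g (t (i + 1)) - g s) + (g s - f s)) := by abel
        rw [heq]
        refine le_trans (norm_add_le _ _) ?_
        have := norm_add_le (g (t (i + 1)) - g s) (g s - f s)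
        linarith
      have h2 : ‖g (t (i + 1)) - g s‖ ≤ ε4 := by
        have hd : dist (t (i + 1)) s < δ := by
          rw [Real.dist_eq, abs_of_nonneg (by linarith [hs.2])]
          have := hmesh i hi
          linarith [hs.1]
        have := hgδ _ hq _ hsI hd
        rw [dist_eq_norm] at this
        exact this.le
      have h3 : ‖g s - f s‖ = φ s := by
        simp only [hφdef, hFdef, Set.indicator_of_mem hsI, norm_sub_rev]
      linarith
    have hconst : IntegrableOn (fun _ : ℝ => ‖f (t (i + 1)) - g (t (i + 1))‖ + ε4)
        (Set.Ioc (t i) (t (i + 1))) volume :=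
      integrableOn_const measure_Ioc_lt_top.ne
    calc (∫ s in Set.Ioc (t i) (t (i + 1)), ‖f (t (i + 1)) - f s‖)
        ≤ ∫ s in Set.Ioc (t i) (t (i + 1)), ((‖f (t (i + 1)) - g (t (i + 1))‖ + ε4) + φ s) :=
          setIntegral_mono_on (hf_on i hi) (hconst.add hφ_int.integrableOn)
            measurableSet_Ioc hbd
      _ = (t (i + 1) - t i) * (‖f (t (i + 1)) - g (t (i + 1))‖ + ε4)
          + ∫ s in Set.Ioc (t i) (t (i + 1)), φ s := by
          rw [integral_add hconst hφ_int.integrableOn, setIntegral_const, smul_eq_mul, measureReal_def,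
            hvolIoc i hi]
      _ = (t (i + 1) - t i) * ‖f (t (i + 1)) - g (t (i + 1))‖ + (t (i + 1) - t i) * ε4
          + ∫ s in Set.Ioc (t i) (t (i + 1)), φ s := by ring
  -- sum of the last pieces
  have hφ_ae : 0 ≤ᵐ[volume] φ := Filter.Eventually.of_forall hφ_nn
  have hCsum : (∑ i ∈ Finset.range n, ∫ s in Set.Ioc (t i) (t (i + 1)), φ s) ≤ ε / 16 := by
    have hdisj : Set.Pairwise ↑(Finset.range n)
        (Function.onFun Disjoint fun i => Set.Ioc (t i) (t (i + 1))) := by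
      intro i hi j hj hij
      simp only [Finset.coe_range, Set.mem_Iio] at hi hj
      apply Set.Ioc_disjoint_Ioc.2
      rcases lt_or_gt_of_ne hij with hlt | hlt
      · exact le_trans (min_le_left _ _)
          (le_trans (tmono j hj.le (i + 1) hlt) (le_max_right _ _))
      · exact le_trans (min_le_right _ _)
          (le_trans (tmono i hi.le (j + 1) hlt) (le_max_left _ _))
    rw [← integral_biUnion_finset (Finset.range n) (fun i _ => measurableSet_Ioc) hdisj
      (fun i _ => hφ_int.integrableOn)]
    exact le_trans (setIntegral_le_integral hφ_int hφ_ae) hg_close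
  have hBsum : (∑ i ∈ Finset.range n, (t (i + 1) - t i)) = b - a := by
    rw [Finset.sum_range_sub, ht0, htn]
  -- the A sum
  have hAsum : (∑ i ∈ Finset.range n,
      (t (i + 1) - t i) * ‖f (t (i + 1)) - g (t (i + 1))‖) < ε / 4 + ε / 4 := by
    have hn' : n - 1 + 1 = n := by omega
    rw [← hn', Finset.sum_range_succ]
    have hlast_le : (t (n - 1 + 1) - t (n - 1)) * ‖f (t (n - 1 + 1)) - g (t (n - 1 + 1))‖
        < ε / 4 := by
      have hm := hmesh (n - 1) (by omega)
      have hmo := hmono (n - 1) (by omega)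
      rw [hn', htn] at hm hmo ⊢
      have h1 : (b - t (n - 1)) * C ≤ (3 * h / 2) * C :=
        mul_le_mul_of_nonneg_right hm hC0
      rw [← hC]
      nlinarith
    have hWd : ∀ i j : ℕ, i < j → Disjoint (W i) (W j) := by
      intro i j hij
      apply Set.Ioc_disjoint_Ioc.2
      refine le_trans (min_le_left _ _) (le_trans ?_ (le_max_right _ _))
      show a + (i : ℝ) * h ≤ a + (j : ℝ) * h - h / 2
      have hij' : (i : ℝ) + 1 ≤ j := by exact_mod_cast hij
      nlinarith
    have hmid : (∑ i ∈ Finset.range (n - 1),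
        (t (i + 1) - t i) * ‖f (t (i + 1)) - g (t (i + 1))‖) ≤ ε / 4 := by
      have hstep : ∀ i ∈ Finset.range (n - 1),
          (t (i + 1) - t i) * ‖f (t (i + 1)) - g (t (i + 1))‖ ≤ 4 * ∫ s in W (i + 1), φ s := by
        intro i hi
        rw [Finset.mem_range] at hi
        have hi1 : i + 1 < n := by omega
        have htu : t (i + 1) = u (i + 1) := by
          simp [ht, Nat.succ_ne_zero, Nat.not_le.mpr hi1]
        have hfF : f (t (i + 1)) = F (t (i + 1)) :=
          (Set.indicator_of_mem (htIcc (i + 1) hi1.le) f).symm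
        have hφval : ‖f (t (i + 1)) - g (t (i + 1))‖ = φ (u (i + 1)) := by
          rw [hfF, htu]
        have havg := hu_avg (i + 1)
        have hmesh' := hmesh i (by omega)
        have hφnn := hφ_nn (u (i + 1))
        rw [hφval]
        nlinarith [mul_le_mul_of_nonneg_right hmesh' hφnn, mul_nonneg hφnn hh0.le]
      calc (∑ i ∈ Finset.range (n - 1),
            (t (i + 1) - t i) * ‖f (t (i + 1)) - g (t (i + 1))‖)
          ≤ ∑ i ∈ Finset.range (n - 1), 4 * ∫ s in W (i + 1), φ s :=
            Finset.sum_le_sum hstep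
        _ = 4 * ∑ i ∈ Finset.range (n - 1), ∫ s in W (i + 1), φ s := by
            rw [Finset.mul_sum]
        _ ≤ 4 * (ε / 16) := by
            apply mul_le_mul_of_nonneg_left _ (by norm_num)
            have hdisj : Set.Pairwise ↑(Finset.range (n - 1))
                (Function.onFun Disjoint fun i => W (i + 1)) := by
              intro i _ j _ hij
              rcases lt_or_gt_of_ne hij with hlt | hlt
              · exact hWd (i + 1) (j + 1) (by omega)
              · exact (hWd (j + 1) (i + 1) (by omega)).symm
            rw [← integral_biUnion_finset (Finset.range (n - 1))
              (fun i _ => measurableSet_Ioc) hdisj (fun i _ => hφ_int.integrableOn)]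
            exact le_trans (setIntegral_le_integral hφ_int hφ_ae) hg_close
        _ = ε / 4 := by ring
    exact add_lt_add_of_le_of_lt hmid hlast_le
  refine ⟨n, t, hn1, ht0, htn, hmono, ?_, ?_⟩
  · intro i hi
    have := hmesh i hi
    linarith
  · calc (∑ i ∈ Finset.range n, ∫ s in Set.Ioc (t i) (t (i + 1)), ‖f (t (i + 1)) - f s‖)
        ≤ ∑ i ∈ Finset.range n,
            ((t (i + 1) - t i) * ‖f (t (i + 1)) - g (t (i + 1))‖ + (t (i + 1) - t i) * ε4
              + ∫ s in Set.Ioc (t i) (t (i + 1)), φ s) :=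
          Finset.sum_le_sum fun i hi => hterm i (Finset.mem_range.1 hi)
      _ = (∑ i ∈ Finset.range n, (t (i + 1) - t i) * ‖f (t (i + 1)) - g (t (i + 1))‖)
          + (∑ i ∈ Finset.range n, (t (i + 1) - t i)) * ε4
          + ∑ i ∈ Finset.range n, ∫ s in Set.Ioc (t i) (t (i + 1)), φ s := by
          rw [Finset.sum_add_distrib, Finset.sum_add_distrib, Finset.sum_mul]
      _ < (ε / 4 + ε / 4) + (b - a) * ε4 + ε / 16 := by
          apply add_lt_add_of_lt_of_le (add_lt_add_of_lt_of_le hAsum (by rw [hBsum])) hCsum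
      _ ≤ ε := by
          have : (b - a) * ε4 = ε / 4 := by
            rw [hε4]; field_simp
          rw [this]; linarith

/-- **Approximation by Riemann sums (Lemma on subdivisions).**
If `f : [a,b] → X` is Bochner integrable with values in a Banach space `X`, there is a
sequence of subdivisions `a = t_k^0 < t_k^1 < ⋯ < t_k^{i_k} = b` of `[a,b]`, with mesh
tending to `0`, such that `∑_{i=1}^{i_k} ∫_{t_k^{i-1}}^{t_k^i} ‖f(t_k^i) - f(t)‖ dt → 0`. -/
theorem stmt0 {X : Type*} [NormedAddCommGroup X] [NormedSpace ℝ X] [CompleteSpace X]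
    (a b : ℝ) (hab : a < b) (f : ℝ → X)
    (hf : IntegrableOn f (Set.Icc a b) volume) :
    ∃ (ik : ℕ → ℕ) (t : ℕ → ℕ → ℝ),
      (∀ k, 1 ≤ ik k) ∧
      (∀ k, t k 0 = a) ∧ (∀ k, t k (ik k) = b) ∧
      (∀ k, ∀ i < ik k, t k i < t k (i + 1)) ∧
      (∀ ε > (0:ℝ), ∃ K : ℕ, ∀ k ≥ K, ∀ i < ik k, t k (i + 1) - t k i < ε) ∧
      Tendsto
        (fun k => ∑ i ∈ Finset.range (ik k),
          ∫ s in Set.Ioc (t k i) (t k (i + 1)), ‖f (t k (i + 1)) - f s‖)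
        atTop (𝓝 0) := by
  have H : ∀ k : ℕ, ∃ (n : ℕ) (t : ℕ → ℝ), 1 ≤ n ∧ t 0 = a ∧ t n = b ∧
      (∀ i < n, t i < t (i + 1)) ∧ (∀ i < n, t (i + 1) - t i < 1 / (k + 1)) ∧
      (∑ i ∈ Finset.range n, ∫ s in Set.Ioc (t i) (t (i + 1)), ‖f (t (i + 1)) - f s‖)
        < 1 / (k + 1) :=
    fun k => key a b hab f hf (by positivity)
  choose ik t h1 h2 h3 h4 h5 h6 using H
  refine ⟨ik, t, h1, h2, h3, h4, ?_, ?_⟩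
  · intro ε hε
    obtain ⟨K, hK⟩ := exists_nat_one_div_lt hε
    refine ⟨K, fun k hk i hi => ?_⟩
    have hkK : ((K : ℝ) + 1) ≤ (k : ℝ) + 1 := by
      have : (K : ℝ) ≤ k := Nat.cast_le.2 hk
      linarith
    calc t k (i + 1) - t k i < 1 / (k + 1) := h5 k i hi
      _ ≤ 1 / (K + 1) := one_div_le_one_div_of_le (by positivity) hkK
      _ < ε := hK
  · apply squeeze_zero
      (fun k => Finset.sum_nonneg fun i _ => integral_nonneg fun s => norm_nonneg _)
      (fun k => (h6 k).le)
    exact tendsto_one_div_add_atTop_nhds_zero_nat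
end

section
/- Let X_j (j ∈ ℕ) be a sequence of Banach spaces and let f_j : [a,b] → X_j be Bochner integrable functions. Then there exists a single sequence of subdivisions (t_k^i)_{0 ≤ i ≤ i_k} of [a,b], independent of j, with mesh tending to 0, such that for every j, ∑_{i=1}^{i_k} ∫_{t_k^{i-1}}^{t_k^i} ‖f_j(t_k^i) - f_j(t)‖_{X_j} dt → 0 as k → ∞. -/
open MeasureTheory Set Filter Topology

lemma exists_pt_le_avg {h : ℝ → ℝ} {u v : ℝ} (huv : u < v)
    (hh : IntegrableOn h (Ioc u v) volume) (h0 : ∀ t ∈ Ioc u v, 0 ≤ h t) :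
    ∃ t ∈ Ioc u v, h t * (v - u) ≤ ∫ s in Ioc u v, h s := by
  by_contra hcon
  push_neg at hcon
  have hvu : 0 < v - u := sub_pos.2 huv
  set c : ℝ := (∫ s in Ioc u v, h s) / (v - u) with hc
  have hclt : ∀ t ∈ Ioc u v, c < h t := by
    intro t ht
    rw [hc, div_lt_iff₀ hvu]
    exact hcon t ht
  have hres : (volume.restrict (Ioc u v)) ≠ 0 := by
    rw [Ne, Measure.restrict_eq_zero, Real.volume_Ioc]
    simp only [ENNReal.ofReal_eq_zero, not_le]
    linarith
  have hcint : IntegrableOn (fun _ : ℝ => c) (Ioc u v) volume :=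
    integrableOn_const (by simp [Real.volume_Ioc])
  have hzero : ∫ s in Ioc u v, (h s - c) = 0 := by
    rw [integral_sub hh hcint, setIntegral_const]
    simp [Real.volume_Ioc, ENNReal.toReal_ofReal hvu.le, hc]
    field_simp
    rw [max_eq_left hvu.le]; ring
  have hnn : 0 ≤ᵐ[volume.restrict (Ioc u v)] fun s => h s - c := by
    filter_upwards [ae_restrict_mem measurableSet_Ioc] with t ht
    exact sub_nonneg.2 (hclt t ht).le
  have := (integral_eq_zero_iff_of_nonneg_ae hnn (hh.sub hcint)).1 hzero
  have : ∀ᵐ t ∂(volume.restrict (Ioc u v)), h t - c = 0 ∧ t ∈ Ioc u v :=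
    this.and (ae_restrict_mem measurableSet_Ioc)
  obtain ⟨t, ht1, ht2⟩ := (ae_neBot.2 hres).nonempty_of_mem this
  exact absurd (hclt t ht2) (by linarith [sub_eq_zero.1 ht1])

set_option maxHeartbeats 2000000 in
lemma keyStep {X : ℕ → Type*} [∀ j, NormedAddCommGroup (X j)] [∀ j, NormedSpace ℝ (X j)]
    [∀ j, CompleteSpace (X j)]
    (a b : ℝ) (hab : a < b) (f : ∀ j, ℝ → X j)
    (hf : ∀ j, IntegrableOn (f j) (Set.Icc a b) volume)
    (m : ℕ) (ε δ0 : ℝ) (hε : 0 < ε) (hδ0 : 0 < δ0) :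
    ∃ (n : ℕ) (t : ℕ → ℝ), 1 ≤ n ∧ t 0 = a ∧ t n = b ∧
      (∀ i < n, t i < t (i + 1)) ∧ (∀ i < n, t (i + 1) - t i < δ0) ∧
      (∀ j ≤ m, ∑ i ∈ Finset.range n,
          ∫ s in Set.Ioc (t i) (t (i + 1)), ‖f j (t (i + 1)) - f j s‖ ≤ ε) := by
  have hba : (0:ℝ) < b - a := sub_pos.2 hab
  set ε' : ℝ := ε / 7 with hε'def
  have hε' : 0 < ε' := by positivity
  -- continuous approximations
  have happrox : ∀ j : ℕ, ∃ g : ℝ → X j, Continuous g ∧ Integrable g volume ∧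
      HasCompactSupport g ∧ ∫ x in Icc a b, ‖f j x - g x‖ ≤ ε' / (m + 1) := by
    intro j
    have hind : Integrable ((Icc a b).indicator (f j)) volume :=
      (hf j).integrable_indicator measurableSet_Icc
    obtain ⟨g, hg1, hg2, hg3, hg4⟩ :=
      hind.exists_hasCompactSupport_integral_sub_le (ε := ε' / (m + 1)) (by positivity)
    refine ⟨g, hg3, hg4, hg1, ?_⟩
    have h1 : ∫ x in Icc a b, ‖f j x - g x‖ =
        ∫ x in Icc a b, ‖(Icc a b).indicator (f j) x - g x‖ :=
      setIntegral_congr_fun measurableSet_Icc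
        (fun x hx => by rw [indicator_of_mem hx])
    rw [h1]
    refine le_trans (setIntegral_le_integral ((hind.sub hg4).norm) ?_) hg2
    exact Eventually.of_forall fun x => norm_nonneg _
  choose g hgc hgint hgsupp hgapprox using happrox
  -- the combined error function
  set h : ℝ → ℝ := fun s => ∑ j ∈ Finset.range (m + 1), ‖f j s - g j s‖ with hhdef
  have hhnn : ∀ s, 0 ≤ h s := fun s => Finset.sum_nonneg fun j _ => norm_nonneg _
  have hdiffint : ∀ j, j ≤ m → ∀ s : Set ℝ, s ⊆ Icc a b →
      IntegrableOn (fun x => ‖f j x - g j x‖) s volume := by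
    intro j _ s hs
    exact (((hf j).mono_set hs).sub ((hgint j).integrableOn)).norm
  have hhint : ∀ s : Set ℝ, s ⊆ Icc a b → IntegrableOn h s volume := by
    intro s hs
    exact integrable_finset_sum _ fun j hj =>
      hdiffint j (Nat.lt_succ_iff.1 (Finset.mem_range.1 hj)) s hs
  have hhsmall : ∫ s in Icc a b, h s ≤ ε' := by
    rw [hhdef]
    rw [integral_finset_sum _ (fun j hj =>
      hdiffint j (Nat.lt_succ_iff.1 (Finset.mem_range.1 hj)) _ subset_rfl)]
    calc ∑ j ∈ Finset.range (m + 1), ∫ s in Icc a b, ‖f j s - g j s‖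
        ≤ ∑ j ∈ Finset.range (m + 1), ε' / (m + 1) :=
          Finset.sum_le_sum fun j _ => hgapprox j
      _ = ε' := by
          rw [Finset.sum_const, Finset.card_range, nsmul_eq_mul]
          field_simp
          norm_num
  -- uniform continuity
  have hunif : ∃ δu > (0:ℝ), ∀ j ≤ m, ∀ x y : ℝ, |x - y| < δu →
      ‖g j x - g j y‖ < ε' / (b - a) := by
    have H : ∀ j : ℕ, ∃ δ > (0:ℝ), ∀ x y : ℝ, |x - y| < δ →
        ‖g j x - g j y‖ < ε' / (b - a) := by
      intro j
      have : UniformContinuous (g j) :=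
        (hgsupp j).uniformContinuous_of_continuous (hgc j)
      obtain ⟨δ, hδ, hδ'⟩ := Metric.uniformContinuous_iff.1 this (ε' / (b - a))
        (by positivity)
      exact ⟨δ, hδ, fun x y hxy => by
        simpa [dist_eq_norm] using hδ' (a := x) (b := y) (by rwa [Real.dist_eq])⟩
    choose δs hδs hδs' using H
    refine ⟨(Finset.range (m + 1)).inf' ⟨0, by simp⟩ δs, ?_, ?_⟩
    · exact (Finset.lt_inf'_iff _).2 fun j _ => hδs j
    · intro j hj x y hxy
      refine hδs' j x y (lt_of_lt_of_le hxy ?_)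
      exact Finset.inf'_le _ (Finset.mem_range.2 (Nat.lt_succ_iff.2 hj))
  obtain ⟨δu, hδu, hδu'⟩ := hunif
  -- choose n
  set δmax : ℝ := min (min (δu / 2) (δ0 / 2)) ((2 * ε' / 3) / (h b + 1)) with hδmaxdef
  have hδmax : 0 < δmax := by
    have := hhnn b
    apply lt_min (lt_min (by positivity) (by positivity))
    positivity
  obtain ⟨n, hn⟩ := exists_nat_gt ((b - a) / δmax)
  have hn0 : 0 < (n:ℝ) := lt_trans (by positivity) hn
  have hn1 : 1 ≤ n := by exact_mod_cast Nat.one_le_iff_ne_zero.2 (by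
    rintro rfl; simp at hn0)
  set δ : ℝ := (b - a) / n with hδdef
  have hδpos : 0 < δ := by positivity
  have hδlt : δ < δmax := by
    rw [hδdef, div_lt_iff₀ hn0]
    calc b - a = ((b - a) / δmax) * δmax := by field_simp
      _ < n * δmax := mul_lt_mul_of_pos_right hn hδmax
      _ = δmax * n := mul_comm _ _
  set p : ℕ → ℝ := fun i => a + i * δ with hpdef
  have hpn : p n = b := by
    simp only [hpdef, hδdef]
    field_simp
    ring
  have hpstep : ∀ i : ℕ, p (i + 1) = p i + δ := by
    intro i
    simp only [hpdef, Nat.cast_add, Nat.cast_one]; ring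
  have hpmono : ∀ i : ℕ, p i < p (i + 1) := fun i => by rw [hpstep]; linarith
  have hpIcc : ∀ i ≤ n, p i ∈ Icc a b := by
    intro i hi
    have hin : (i:ℝ) ≤ n := by exact_mod_cast hi
    constructor
    · simp only [hpdef]
      nlinarith [Nat.cast_nonneg (α := ℝ) i]
    · rw [← hpn]
      simp only [hpdef, add_le_add_iff_left]
      nlinarith
  -- choose tags
  have htag : ∀ i : ℕ, ∃ x : ℝ, 1 ≤ i → i < n →
      x ∈ Ioc (p i - δ / 2) (p i) ∧ h x * (δ / 2) ≤ ∫ s in Ioc (p i - δ / 2) (p i), h s := by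
    intro i
    by_cases hi : 1 ≤ i ∧ i < n
    · obtain ⟨hi1, hi2⟩ := hi
      have hplb : a + δ / 2 ≤ p i := by
        simp only [hpdef, add_le_add_iff_left]
        have : (1:ℝ) ≤ i := by exact_mod_cast hi1
        nlinarith
      have hsub : Ioc (p i - δ / 2) (p i) ⊆ Icc a b := by
        intro x hx
        exact ⟨by linarith [hx.1], by linarith [hx.2, (hpIcc i hi2.le).2]⟩
      obtain ⟨x, hx1, hx2⟩ := exists_pt_le_avg (by linarith) (hhint _ hsub)
        (fun t _ => hhnn t)
      refine ⟨x, fun _ _ => ⟨hx1, ?_⟩⟩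
      convert hx2 using 2
      ring
    · exact ⟨0, fun h1 h2 => absurd ⟨h1, h2⟩ hi⟩
  choose τ hτ using htag
  -- the partition
  set t : ℕ → ℝ := fun i => if i = 0 then a else if n ≤ i then b else τ i with htdef
  have ht0 : t 0 = a := by simp [htdef]
  have htn : t n = b := by
    simp only [htdef]
    rw [if_neg (by omega), if_pos le_rfl]
  have htlb : ∀ i ≤ n, p i - δ / 2 ≤ t i := by
    intro i hi
    rcases Nat.eq_zero_or_pos i with rfl | hi1
    · simp only [htdef, if_pos rfl, hpdef]
      simp
      linarith
    rcases eq_or_lt_of_le hi with rfl | hi2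
    · rw [htn, ← hpn]; linarith
    · simp only [htdef]
      rw [if_neg (by omega), if_neg (by omega)]
      exact ((hτ i hi1 hi2).1.1).le
  have htub : ∀ i ≤ n, t i ≤ p i := by
    intro i hi
    rcases Nat.eq_zero_or_pos i with rfl | hi1
    · simp only [htdef, if_pos rfl, hpdef]
      simp
    rcases eq_or_lt_of_le hi with rfl | hi2
    · rw [htn, ← hpn]
    · simp only [htdef]
      rw [if_neg (by omega), if_neg (by omega)]
      exact (hτ i hi1 hi2).1.2
  have htmono : ∀ i < n, t i < t (i + 1) := by
    intro i hi
    have ub := htub i hi.le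
    have lb := htlb (i + 1) hi
    have hs := hpstep i
    calc t i ≤ p i := ub
      _ < p (i + 1) - δ / 2 := by rw [hs]; linarith
      _ ≤ t (i + 1) := lb
  have htmesh : ∀ i < n, t (i + 1) - t i < 3 * δ / 2 := by
    intro i hi
    have h2 := htub (i + 1) hi
    have hs := hpstep i
    rcases Nat.eq_zero_or_pos i with rfl | hi1
    · have h0p : t 0 = p 0 := by rw [ht0]; simp [hpdef]
      linarith
    · have hstrict : p i - δ / 2 < t i := by
        simp only [htdef]
        rw [if_neg (by omega), if_neg (by omega)]
        exact (hτ i hi1 hi).1.1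
      have h3 : t (i + 1) ≤ p i + δ := hs ▸ h2
      clear_value t p δ
      linarith [hstrict, h3]
  -- relations between δ and the thresholds
  have hδδu : 2 * δ ≤ δu := by
    have h1 : δmax ≤ δu / 2 := (min_le_left _ _).trans (min_le_left _ _)
    linarith
  have hδδ0 : 3 * δ / 2 < δ0 := by
    have h1 : δmax ≤ δ0 / 2 := (min_le_left _ _).trans (min_le_right _ _)
    linarith
  have hδhb : 3 * δ / 2 * h b ≤ ε' := by
    have h1 : δmax ≤ 2 * ε' / 3 / (h b + 1) := min_le_right _ _
    have h2 : 0 ≤ h b := hhnn b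
    have h3 : δ ≤ 2 * ε' / 3 / (h b + 1) := le_trans hδlt.le h1
    have h4 : δ * (h b + 1) ≤ 2 * ε' / 3 :=
      (le_div_iff₀ (by positivity)).1 h3
    nlinarith
  refine ⟨n, t, hn1, ht0, htn, htmono,
    fun i hi => lt_of_lt_of_le (htmesh i hi) hδδ0.le, ?_⟩
  intro j hj
  clear_value ε' h δmax δ p t
  -- endpoints of the partition lie in [a, b]
  have htIcc : ∀ i ≤ n, t i ∈ Icc a b := by
    intro i hi
    refine ⟨?_, (htub i hi).trans (hpIcc i hi).2⟩
    rcases Nat.eq_zero_or_pos i with rfl | hi1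
    · rw [ht0]
    · have h1 := htlb i hi
      have h2 : a + δ ≤ p i := by
        simp only [hpdef, add_le_add_iff_left]
        have : (1:ℝ) ≤ i := by exact_mod_cast hi1
        nlinarith
      linarith
  have hIocsub : ∀ i < n, Ioc (t i) (t (i + 1)) ⊆ Icc a b := by
    intro i hi x hx
    exact ⟨(htIcc i hi.le).1.trans hx.1.le, hx.2.trans (htIcc (i + 1) hi).2⟩
  have hΔh : ∀ x, ‖f j x - g j x‖ ≤ h x := by
    intro x
    rw [hhdef]
    exact Finset.single_le_sum (f := fun j => ‖f j x - g j x‖)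
      (fun j _ => norm_nonneg _) (Finset.mem_range.2 (Nat.lt_succ_iff.2 hj))
  -- the per-interval estimate
  have hstep : ∀ i < n, ∫ s in Ioc (t i) (t (i + 1)), ‖f j (t (i + 1)) - f j s‖
      ≤ (t (i + 1) - t i) * ‖f j (t (i + 1)) - g j (t (i + 1))‖
        + (t (i + 1) - t i) * (ε' / (b - a))
        + ∫ s in Ioc (t i) (t (i + 1)), ‖f j s - g j s‖ := by
    intro i hi
    have hmesh := htmesh i hi
    have hmono := htmono i hi
    have hsub := hIocsub i hi
    have hμfin : volume (Ioc (t i) (t (i + 1))) < ⊤ := by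
      rw [Real.volume_Ioc]; exact ENNReal.ofReal_lt_top
    have key : ∀ s ∈ Ioc (t i) (t (i + 1)), ‖f j (t (i + 1)) - f j s‖
        ≤ (‖f j (t (i + 1)) - g j (t (i + 1))‖ + ε' / (b - a)) + ‖f j s - g j s‖ := by
      intro s hs
      have hd : |t (i + 1) - s| < δu := by
        rw [abs_of_nonneg (by linarith [hs.2])]
        have := hs.1
        linarith
      have hg := hδu' j hj (t (i + 1)) s hd
      have hsplit : f j (t (i + 1)) - f j s =
          (f j (t (i + 1)) - g j (t (i + 1))) + (g j (t (i + 1)) - g j s)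
            + (g j s - f j s) := by abel
      calc ‖f j (t (i + 1)) - f j s‖
          ≤ ‖f j (t (i + 1)) - g j (t (i + 1))‖ + ‖g j (t (i + 1)) - g j s‖
            + ‖g j s - f j s‖ := by rw [hsplit]; exact norm_add₃_le
        _ ≤ (‖f j (t (i + 1)) - g j (t (i + 1))‖ + ε' / (b - a)) + ‖f j s - g j s‖ := by
            rw [norm_sub_rev (g j s)]
            linarith
    have hconstint : IntegrableOn
        (fun _ : ℝ => ‖f j (t (i + 1)) - g j (t (i + 1))‖ + ε' / (b - a))
        (Ioc (t i) (t (i + 1))) volume := integrableOn_const hμfin.ne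
    have int1 : IntegrableOn (fun s => ‖f j (t (i + 1)) - f j s‖)
        (Ioc (t i) (t (i + 1))) volume :=
      ((integrableOn_const hμfin.ne).sub ((hf j).mono_set hsub)).norm
    have int2 := hdiffint j hj _ hsub
    calc ∫ s in Ioc (t i) (t (i + 1)), ‖f j (t (i + 1)) - f j s‖
        ≤ ∫ s in Ioc (t i) (t (i + 1)),
            ((‖f j (t (i + 1)) - g j (t (i + 1))‖ + ε' / (b - a)) + ‖f j s - g j s‖) :=
          setIntegral_mono_on int1 (hconstint.add int2) measurableSet_Ioc key
      _ = (t (i + 1) - t i) * (‖f j (t (i + 1)) - g j (t (i + 1))‖ + ε' / (b - a))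
          + ∫ s in Ioc (t i) (t (i + 1)), ‖f j s - g j s‖ := by
          rw [integral_add hconstint int2, setIntegral_const, smul_eq_mul,
            Real.volume_real_Ioc_of_le hmono.le]
      _ = (t (i + 1) - t i) * ‖f j (t (i + 1)) - g j (t (i + 1))‖
          + (t (i + 1) - t i) * (ε' / (b - a))
          + ∫ s in Ioc (t i) (t (i + 1)), ‖f j s - g j s‖ := by ring
  -- interval integrability for adjacency
  have hadjC : ∀ i < n, IntervalIntegrable (fun s => ‖f j s - g j s‖) volume
      (t i) (t (i + 1)) := by
    intro i hi
    exact (intervalIntegrable_iff_integrableOn_Ioc_of_le (htmono i hi).le).2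
      (hdiffint j hj _ (hIocsub i hi))
  have hpIocsub : ∀ i < n, Ioc (p i) (p (i + 1)) ⊆ Icc a b := by
    intro i hi x hx
    exact ⟨(hpIcc i hi.le).1.trans hx.1.le, hx.2.trans (hpIcc (i + 1) hi).2⟩
  have hadjH : ∀ i < n, IntervalIntegrable h volume (p i) (p (i + 1)) := by
    intro i hi
    exact (intervalIntegrable_iff_integrableOn_Ioc_of_le (hpmono i).le).2
      (hhint _ (hpIocsub i hi))
  -- term C : the sum of the approximation errors
  have hC : ∑ i ∈ Finset.range n, ∫ s in Ioc (t i) (t (i + 1)), ‖f j s - g j s‖ ≤ ε' := by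
    have e1 : ∀ i ∈ Finset.range n, ∫ s in Ioc (t i) (t (i + 1)), ‖f j s - g j s‖
        = ∫ s in (t i)..(t (i + 1)), ‖f j s - g j s‖ := by
      intro i hi
      rw [intervalIntegral.integral_of_le (htmono i (Finset.mem_range.1 hi)).le]
    rw [Finset.sum_congr rfl e1,
      intervalIntegral.sum_integral_adjacent_intervals hadjC,
      ht0, htn, intervalIntegral.integral_of_le hab.le]
    calc ∫ s in Ioc a b, ‖f j s - g j s‖ ≤ ∫ s in Icc a b, ‖f j s - g j s‖ :=
          setIntegral_mono_set (hdiffint j hj _ subset_rfl)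
            (Eventually.of_forall fun s => norm_nonneg _)
            (HasSubset.Subset.eventuallyLE Ioc_subset_Icc_self)
      _ ≤ ε' / (m + 1) := hgapprox j
      _ ≤ ε' := by
          rw [div_le_iff₀ (by positivity)]
          nlinarith [hε'.le, Nat.cast_nonneg (α := ℝ) m]
  -- term B : the modulus-of-continuity sum
  have hB : ∑ i ∈ Finset.range n, (t (i + 1) - t i) * (ε' / (b - a)) = ε' := by
    rw [← Finset.sum_mul, Finset.sum_range_sub t, ht0, htn]
    field_simp
  -- term A : the tag errors
  have hA : ∑ i ∈ Finset.range n, (t (i + 1) - t i) * ‖f j (t (i + 1)) - g j (t (i + 1))‖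
      ≤ 4 * ε' + ε' := by
    obtain ⟨n', rfl⟩ : ∃ n', n = n' + 1 := ⟨n - 1, by omega⟩
    rw [Finset.sum_range_succ]
    have hlast : (t (n' + 1) - t n') * ‖f j (t (n' + 1)) - g j (t (n' + 1))‖ ≤ ε' := by
      rw [htn]
      calc (b - t n') * ‖f j b - g j b‖
          ≤ 3 * δ / 2 * h b := by
            apply mul_le_mul (by rw [← htn]; exact (htmesh n' (by omega)).le)
              (hΔh b) (norm_nonneg _) (by linarith [hδpos])
        _ ≤ ε' := hδhb
    have hmain : ∑ i ∈ Finset.range n', (t (i + 1) - t i) * ‖f j (t (i + 1)) - g j (t (i + 1))‖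
        ≤ 4 * ε' := by
      have hterm : ∀ i ∈ Finset.range n',
          (t (i + 1) - t i) * ‖f j (t (i + 1)) - g j (t (i + 1))‖
          ≤ 4 * ∫ s in Ioc (p (i + 1) - δ / 2) (p (i + 1)), h s := by
        intro i hi
        have hi' : i + 1 < n' + 1 := by
          have := Finset.mem_range.1 hi; omega
        have hτi := hτ (i + 1) (by omega) hi'
        have hteq : t (i + 1) = τ (i + 1) := by
          simp only [htdef]
          rw [if_neg (by omega), if_neg (by omega)]
        calc (t (i + 1) - t i) * ‖f j (t (i + 1)) - g j (t (i + 1))‖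
            ≤ 2 * δ * h (t (i + 1)) := by
              apply mul_le_mul (by linarith [htmesh i (by omega : i < n' + 1)])
                (hΔh _) (norm_nonneg _) (by linarith [hδpos])
          _ = 4 * (h (τ (i + 1)) * (δ / 2)) := by rw [hteq]; ring
          _ ≤ 4 * ∫ s in Ioc (p (i + 1) - δ / 2) (p (i + 1)), h s := by
              linarith [hτi.2]
      calc ∑ i ∈ Finset.range n', (t (i + 1) - t i) * ‖f j (t (i + 1)) - g j (t (i + 1))‖
          ≤ ∑ i ∈ Finset.range n', 4 * ∫ s in Ioc (p (i + 1) - δ / 2) (p (i + 1)), h s :=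
            Finset.sum_le_sum hterm
        _ ≤ ∑ i ∈ Finset.range n', 4 * ∫ s in Ioc (p i) (p (i + 1)), h s := by
            refine Finset.sum_le_sum fun i hi => ?_
            have hi' : i < n' + 1 := by have := Finset.mem_range.1 hi; omega
            have hss : Ioc (p (i + 1) - δ / 2) (p (i + 1)) ⊆ Ioc (p i) (p (i + 1)) := by
              apply Ioc_subset_Ioc_left
              rw [hpstep i]; linarith
            have := setIntegral_mono_set (hhint _ (hpIocsub i hi'))
              (Eventually.of_forall fun s => hhnn s)
              (HasSubset.Subset.eventuallyLE hss)
            linarith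
        _ ≤ ∑ i ∈ Finset.range (n' + 1), 4 * ∫ s in Ioc (p i) (p (i + 1)), h s := by
            rw [Finset.sum_range_succ]
            have : 0 ≤ ∫ s in Ioc (p n') (p (n' + 1)), h s :=
              setIntegral_nonneg measurableSet_Ioc fun s _ => hhnn s
            linarith
        _ = 4 * ∑ i ∈ Finset.range (n' + 1), ∫ s in Ioc (p i) (p (i + 1)), h s := by
            rw [Finset.mul_sum]
        _ = 4 * ∫ s in Ioc a b, h s := by
            congr 1
            have e1 : ∀ i ∈ Finset.range (n' + 1), ∫ s in Ioc (p i) (p (i + 1)), h s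
                = ∫ s in (p i)..(p (i + 1)), h s := by
              intro i hi
              rw [intervalIntegral.integral_of_le (hpmono i).le]
            rw [Finset.sum_congr rfl e1,
              intervalIntegral.sum_integral_adjacent_intervals hadjH]
            have hp0 : p 0 = a := by simp [hpdef]
            rw [hp0, hpn, intervalIntegral.integral_of_le hab.le]
        _ ≤ 4 * ε' := by
            have : ∫ s in Ioc a b, h s ≤ ∫ s in Icc a b, h s :=
              setIntegral_mono_set (hhint _ subset_rfl)
                (Eventually.of_forall fun s => hhnn s)
                (HasSubset.Subset.eventuallyLE Ioc_subset_Icc_self)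
            linarith
    linarith
  -- put everything together
  calc ∑ i ∈ Finset.range n, ∫ s in Ioc (t i) (t (i + 1)), ‖f j (t (i + 1)) - f j s‖
      ≤ ∑ i ∈ Finset.range n,
          ((t (i + 1) - t i) * ‖f j (t (i + 1)) - g j (t (i + 1))‖
            + (t (i + 1) - t i) * (ε' / (b - a))
            + ∫ s in Ioc (t i) (t (i + 1)), ‖f j s - g j s‖) :=
        Finset.sum_le_sum fun i hi => hstep i (Finset.mem_range.1 hi)
    _ = ∑ i ∈ Finset.range n, (t (i + 1) - t i) * ‖f j (t (i + 1)) - g j (t (i + 1))‖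
        + ∑ i ∈ Finset.range n, (t (i + 1) - t i) * (ε' / (b - a))
        + ∑ i ∈ Finset.range n, ∫ s in Ioc (t i) (t (i + 1)), ‖f j s - g j s‖ := by
        rw [Finset.sum_add_distrib, Finset.sum_add_distrib]
    _ ≤ (4 * ε' + ε') + ε' + ε' := by linarith [hA, hB.le, hC]
    _ = ε := by rw [hε'def]; ring

/-- **Simultaneous Riemann-sum approximation for countably many Banach-valued functions.**
Given Banach spaces `X j` and Bochner integrable `f j : [a,b] → X j`, there is a single
sequence of subdivisions of `[a,b]`, independent of `j`, with mesh tending to `0`, such that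
for every `j`, `∑_i ∫_{t_k^{i-1}}^{t_k^i} ‖f_j(t_k^i) - f_j(t)‖ dt → 0`. -/
theorem stmt2 {X : ℕ → Type*} [∀ j, NormedAddCommGroup (X j)] [∀ j, NormedSpace ℝ (X j)]
    [∀ j, CompleteSpace (X j)]
    (a b : ℝ) (hab : a < b) (f : ∀ j, ℝ → X j)
    (hf : ∀ j, IntegrableOn (f j) (Set.Icc a b) volume) :
    ∃ (ik : ℕ → ℕ) (t : ℕ → ℕ → ℝ),
      (∀ k, 1 ≤ ik k) ∧
      (∀ k, t k 0 = a) ∧ (∀ k, t k (ik k) = b) ∧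
      (∀ k, ∀ i < ik k, t k i < t k (i + 1)) ∧
      (∀ ε > (0:ℝ), ∃ K : ℕ, ∀ k ≥ K, ∀ i < ik k, t k (i + 1) - t k i < ε) ∧
      ∀ j, Tendsto
        (fun k => ∑ i ∈ Finset.range (ik k),
          ∫ s in Set.Ioc (t k i) (t k (i + 1)), ‖f j (t k (i + 1)) - f j s‖)
        atTop (𝓝 0) := by
  have key : ∀ k : ℕ, ∃ (n : ℕ) (t : ℕ → ℝ), 1 ≤ n ∧ t 0 = a ∧ t n = b ∧
      (∀ i < n, t i < t (i + 1)) ∧ (∀ i < n, t (i + 1) - t i < 1 / (k + 1)) ∧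
      (∀ j ≤ k, ∑ i ∈ Finset.range n,
          ∫ s in Set.Ioc (t i) (t (i + 1)), ‖f j (t (i + 1)) - f j s‖ ≤ 1 / (k + 1)) :=
    fun k => keyStep a b hab f hf k (1 / (k + 1)) (1 / (k + 1))
      (by positivity) (by positivity)
  choose ik t h1 h2 h3 h4 h5 h6 using key
  refine ⟨ik, t, h1, h2, h3, h4, ?_, ?_⟩
  · intro ε hε
    obtain ⟨K, hK⟩ := exists_nat_one_div_lt hε
    refine ⟨K, fun k hk i hi => ?_⟩
    have hm := h5 k i hi
    have hmono : (1:ℝ) / (k + 1) ≤ 1 / (K + 1) := by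
      apply one_div_le_one_div_of_le (by positivity)
      exact_mod_cast Nat.succ_le_succ hk
    linarith
  · intro j
    apply tendsto_of_tendsto_of_tendsto_of_le_of_le'
      (tendsto_const_nhds (x := (0:ℝ)))
      tendsto_one_div_add_atTop_nhds_zero_nat
    · filter_upwards with k
      exact Finset.sum_nonneg fun i _ =>
        setIntegral_nonneg measurableSet_Ioc fun s _ => norm_nonneg _
    · filter_upwards [eventually_ge_atTop j] with k hk
      exact h6 k j hk
end

section
/- Let (X, 𝒜, μ) be a finite measure space, p > 1, and H : X × ℝⁿ → ℝᵐ a Carathéodory function satisfying |H(x,ξ)| ≤ a|ξ|^{p-1} + b(x) for some constant a ≥ 0 and nonnegative b ∈ L^{p'}(X) with p' = p/(p-1). Let Φ_k be a bounded sequence in L^p(X;ℝⁿ) and Ψ_k a sequence converging to 0 strongly in L^p(X;ℝⁿ). Then for every Φ ∈ L^p(X;ℝᵐ), ∫_X [H(x, Φ_k(x)+Ψ_k(x)) - H(x, Φ_k(x))] · Φ(x) dμ(x) → 0 as k → ∞. -/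
open MeasureTheory Set Filter Topology
open scoped ENNReal NNReal

abbrev Eucl (n : ℕ) : Type := EuclideanSpace ℝ (Fin n)

set_option maxHeartbeats 1000000 in
lemma osc_aux {α : Type*} [MeasurableSpace α] (μ : Measure α) [IsFiniteMeasure μ]
    {n m : ℕ} (H : α → Eucl n → Eucl m)
    (hmeas : ∀ ξ, Measurable fun x => H x ξ) (hcont : ∀ x, Continuous (H x))
    (M : ℝ) (ε : ℝ≥0∞) (hε : 0 < ε) :
    ∃ w : ℕ → α → ℝ≥0∞, (∀ j, Measurable (w j)) ∧
      (∀ (j : ℕ) (ξ η : Eucl n) (x : α), ‖ξ‖ ≤ M → ‖η‖ ≤ 1 / (j + 1) →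
        (‖H x (ξ + η) - H x ξ‖₊ : ℝ≥0∞) ≤ w j x) ∧
      Tendsto (fun j => μ {x | ε ≤ w j x}) atTop (𝓝 0) := by
  classical
  obtain ⟨s, hsc, hsd⟩ := TopologicalSpace.exists_countable_dense (Eucl n)
  haveI : Countable s := hsc.to_subtype
  set w : ℕ → α → ℝ≥0∞ := fun j x =>
    ⨆ i : s × s, if ‖(i.1 : Eucl n)‖ ≤ M + 1 ∧ ‖(i.2 : Eucl n)‖ ≤ 2 / ((j : ℝ) + 1)
      then (‖H x ((i.1 : Eucl n) + (i.2 : Eucl n)) - H x (i.1 : Eucl n)‖₊ : ℝ≥0∞) else 0 with hw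
  have hwmeas : ∀ j, Measurable (w j) := by
    intro j
    refine Measurable.iSup fun i => ?_
    split_ifs
    · exact ((hmeas _).sub (hmeas _)).enorm
    · exact measurable_const
  have hwanti : ∀ x, Antitone fun j => w j x := by
    intro x j j' hjj'
    refine iSup_mono fun i => ?_
    by_cases h : ‖(i.1 : Eucl n)‖ ≤ M + 1 ∧ ‖(i.2 : Eucl n)‖ ≤ 2 / ((j' : ℝ) + 1)
    · rw [if_pos h, if_pos ⟨h.1, h.2.trans (by gcongr)⟩]
    · rw [if_neg h]; exact zero_le
  have hwdom : ∀ (j : ℕ) (ξ η : Eucl n) (x : α), ‖ξ‖ ≤ M → ‖η‖ ≤ 1 / ((j : ℝ) + 1) →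
      (‖H x (ξ + η) - H x ξ‖₊ : ℝ≥0∞) ≤ w j x := by
    intro j ξ η x hξ hη
    have hcl : (ξ, η) ∈ closure (s ×ˢ s) := by
      rw [(hsd.prod hsd).closure_eq]; trivial
    obtain ⟨y, hy_mem, hy_tendsto⟩ := mem_closure_iff_seq_limit.1 hcl
    have h1 : Tendsto (fun i => (y i).1) atTop (𝓝 ξ) :=
      (continuous_fst.tendsto _).comp hy_tendsto
    have h2 : Tendsto (fun i => (y i).2) atTop (𝓝 η) :=
      (continuous_snd.tendsto _).comp hy_tendsto
    have hev1 : ∀ᶠ i in atTop, ‖(y i).1‖ ≤ M + 1 :=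
      ((continuous_norm.tendsto _).comp h1).eventually_le_const (lt_of_le_of_lt hξ (by linarith))
    have hev2 : ∀ᶠ i in atTop, ‖(y i).2‖ ≤ 2 / ((j : ℝ) + 1) := by
      refine ((continuous_norm.tendsto _).comp h2).eventually_le_const (lt_of_le_of_lt hη ?_)
      have hj : (0:ℝ) < (j:ℝ) + 1 := by positivity
      rw [div_lt_div_iff_of_pos_right hj]
      norm_num
    have hFt : Tendsto (fun i => (‖H x ((y i).1 + (y i).2) - H x ((y i).1)‖₊ : ℝ≥0∞)) atTop
        (𝓝 (‖H x (ξ + η) - H x ξ‖₊ : ℝ≥0∞)) := by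
      have t1 : Tendsto (fun i => H x ((y i).1 + (y i).2)) atTop (𝓝 (H x (ξ + η))) :=
        ((hcont x).tendsto _).comp (h1.add h2)
      have t2 : Tendsto (fun i => H x ((y i).1)) atTop (𝓝 (H x ξ)) :=
        ((hcont x).tendsto _).comp h1
      exact ENNReal.tendsto_coe.2 ((t1.sub t2).nnnorm)
    refine le_of_tendsto hFt ?_
    filter_upwards [hev1, hev2] with i hi1 hi2
    have hmem := hy_mem i
    rw [Set.mem_prod] at hmem
    refine le_trans ?_ (le_iSup _ (⟨⟨(y i).1, hmem.1⟩, ⟨(y i).2, hmem.2⟩⟩ : s × s))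
    rw [if_pos ⟨hi1, hi2⟩]
  have hwto : ∀ x, Tendsto (fun j => w j x) atTop (𝓝 0) := by
    intro x
    rw [ENNReal.tendsto_atTop_zero]
    intro b hb
    obtain ⟨r, hr0, hrb⟩ : ∃ r : ℝ, 0 < r ∧ ENNReal.ofReal r ≤ b := by
      rcases eq_or_ne b ⊤ with h | h
      · exact ⟨1, one_pos, by simp [h]⟩
      · exact ⟨b.toReal, ENNReal.toReal_pos hb.ne' h, by rw [ENNReal.ofReal_toReal h]⟩
    have hK : IsCompact (Metric.closedBall (0 : Eucl n) (|M| + 3)) := isCompact_closedBall _ _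
    have hUC : UniformContinuousOn (H x) (Metric.closedBall 0 (|M| + 3)) :=
      hK.uniformContinuousOn_of_continuous ((hcont x).continuousOn)
    rw [Metric.uniformContinuousOn_iff] at hUC
    obtain ⟨d, hd0, hd⟩ := hUC r hr0
    obtain ⟨N, hN⟩ := exists_nat_gt (2 / d)
    refine ⟨N, fun j hj => ?_⟩
    refine le_trans (iSup_le fun i => ?_) hrb
    by_cases hcnd : ‖(i.1 : Eucl n)‖ ≤ M + 1 ∧ ‖(i.2 : Eucl n)‖ ≤ 2 / ((j : ℝ) + 1)
    · rw [if_pos hcnd]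
      have hj1 : (0:ℝ) < (j:ℝ) + 1 := by positivity
      have h2j : 2 / ((j : ℝ) + 1) < d := by
        rw [div_lt_iff₀ hj1]
        have h1 : 2 / d < (N : ℝ) := hN
        have h2 : (N : ℝ) ≤ (j : ℝ) := by exact_mod_cast hj
        rw [div_lt_iff₀ hd0] at h1
        nlinarith
      have hle2 : ‖(i.2 : Eucl n)‖ ≤ 2 := by
        refine hcnd.2.trans ?_
        rw [div_le_iff₀ hj1]; nlinarith
      have hM1 : ‖(i.1 : Eucl n)‖ ≤ |M| + 3 := by
        have := le_abs_self M; linarith [hcnd.1]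
      have hmem1 : (i.1 : Eucl n) + (i.2 : Eucl n) ∈ Metric.closedBall (0 : Eucl n) (|M| + 3) := by
        rw [Metric.mem_closedBall, dist_zero_right]
        calc ‖(i.1 : Eucl n) + (i.2 : Eucl n)‖ ≤ ‖(i.1 : Eucl n)‖ + ‖(i.2 : Eucl n)‖ :=
              norm_add_le _ _
          _ ≤ (M + 1) + 2 := add_le_add hcnd.1 hle2
          _ ≤ |M| + 3 := by have := le_abs_self M; linarith
      have hmem2 : (i.1 : Eucl n) ∈ Metric.closedBall (0 : Eucl n) (|M| + 3) := by
        rw [Metric.mem_closedBall, dist_zero_right]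
        have := le_abs_self M; linarith [hcnd.1]
      have hdist : dist ((i.1 : Eucl n) + (i.2 : Eucl n)) (i.1 : Eucl n) < d := by
        rw [dist_eq_norm]
        simpa using lt_of_le_of_lt hcnd.2 h2j
      have := hd _ hmem1 _ hmem2 hdist
      rw [dist_eq_norm] at this
      rw [← enorm_eq_nnnorm, ← ofReal_norm]
      exact ENNReal.ofReal_le_ofReal this.le
    · rw [if_neg hcnd]; exact zero_le
  refine ⟨w, hwmeas, hwdom, ?_⟩
  have hA : ∀ j, MeasurableSet {x | ε ≤ w j x} := fun j =>
    measurableSet_le measurable_const (hwmeas j)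
  have hiInter : ⋂ j, {x | ε ≤ w j x} = ∅ := by
    ext x
    simp only [Set.mem_iInter, Set.mem_setOf_eq, Set.mem_empty_iff_false, iff_false, not_forall]
    by_contra h
    push_neg at h
    have : ε ≤ 0 := ge_of_tendsto (hwto x) (Eventually.of_forall h)
    exact hε.not_ge this
  have := tendsto_measure_iInter_atTop (μ := μ) (s := fun j => {x | ε ≤ w j x})
    (fun j => (hA j).nullMeasurableSet)
    (fun j j' hjj' x hx => le_trans hx (hwanti x hjj'))
    ⟨0, measure_ne_top μ _⟩
  rw [hiInter, measure_empty] at this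
  exact this


set_option maxHeartbeats 2000000 in
/-- **Perturbation lemma for Nemytskii operators.**
Let `(X, 𝒜, μ)` be a finite measure space, `p > 1`, and `H : X × ℝⁿ → ℝᵐ` a Carathéodory
function with `|H(x,ξ)| ≤ a|ξ|^{p-1} + b(x)`, `b ∈ L^{p'}`. If `Φ_k` is bounded in
`L^p(X;ℝⁿ)` and `Ψ_k → 0` strongly in `L^p(X;ℝⁿ)`, then for every `Φ ∈ L^p(X;ℝᵐ)`,
`∫ (H(x,Φ_k+Ψ_k) - H(x,Φ_k)) · Φ dμ → 0`. -/
theorem stmt3 {α : Type*} [MeasurableSpace α] (μ : Measure α) [IsFiniteMeasure μ]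
    {n m : ℕ} (p : ℝ) (hp : 1 < p)
    (H : α → Eucl n → Eucl m)
    (hmeas : ∀ ξ, Measurable fun x => H x ξ) (hcont : ∀ x, Continuous (H x))
    (a : ℝ) (ha : 0 ≤ a) (b : α → ℝ) (hb0 : ∀ x, 0 ≤ b x)
    (hb : MemLp b (ENNReal.ofReal (p / (p - 1))) μ)
    (hH : ∀ x ξ, ‖H x ξ‖ ≤ a * ‖ξ‖ ^ (p - 1) + b x)
    (Φk Ψk : ℕ → α → Eucl n)
    (hΦk : ∀ k, MemLp (Φk k) (ENNReal.ofReal p) μ)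
    (hΦbdd : ∃ C : ℝ≥0∞, C < ⊤ ∧ ∀ k, eLpNorm (Φk k) (ENNReal.ofReal p) μ ≤ C)
    (hΨk : ∀ k, MemLp (Ψk k) (ENNReal.ofReal p) μ)
    (hΨ0 : Tendsto (fun k => eLpNorm (Ψk k) (ENNReal.ofReal p) μ) atTop (𝓝 0)) :
    ∀ Φ : α → Eucl m, MemLp Φ (ENNReal.ofReal p) μ →
      Tendsto
        (fun k => ∫ x, (inner ℝ (H x (Φk k x + Ψk k x) - H x (Φk k x)) (Φ x) : ℝ) ∂μ)
        atTop (𝓝 0) := by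
  classical
  intro Φ hΦ
  have hp0 : (0:ℝ) < p := lt_trans one_pos hp
  have hp1 : (0:ℝ) < p - 1 := sub_pos.2 hp
  set P := ENNReal.ofReal p with hPdef
  set q := ENNReal.ofReal (p / (p - 1)) with hqdef
  have hP1 : 1 ≤ P := ENNReal.one_le_ofReal.2 hp.le
  have hPtop : P ≠ ⊤ := ENNReal.ofReal_ne_top
  have hP0 : P ≠ 0 := (ENNReal.ofReal_pos.2 hp0).ne'
  have hq1 : 1 ≤ q := ENNReal.one_le_ofReal.2 ((one_le_div hp1).2 (by linarith))
  have hqtop : q ≠ ⊤ := ENNReal.ofReal_ne_top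
  have hpt : 0 < P.toReal := by
    rw [hPdef, ENNReal.toReal_ofReal hp0.le]; exact hp0
  have hconj : 1 / q + 1 / P = (1 : ℝ≥0∞) := by
    rw [hPdef, hqdef, one_div, one_div, ← ENNReal.ofReal_inv_of_pos (by positivity),
      ← ENNReal.ofReal_inv_of_pos hp0,
      ← ENNReal.ofReal_add (by positivity) (by positivity), ← ENNReal.ofReal_one]
    congr 1
    field_simp
    ring
  obtain ⟨C, hCtop, hC⟩ := hΦbdd
  -- measurable representatives
  set u : ℕ → α → Eucl n := fun k => (hΦk k).1.mk (Φk k) with hu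
  set v : ℕ → α → Eucl n := fun k => (hΨk k).1.mk (Ψk k) with hv
  set φ : α → Eucl m := hΦ.1.mk Φ with hφ
  have humeas : ∀ k, Measurable (u k) := fun k => (hΦk k).1.stronglyMeasurable_mk.measurable
  have hvmeas : ∀ k, Measurable (v k) := fun k => (hΨk k).1.stronglyMeasurable_mk.measurable
  have hφmeas : Measurable φ := hΦ.1.stronglyMeasurable_mk.measurable
  have hueq : ∀ k, Φk k =ᵐ[μ] u k := fun k => (hΦk k).1.ae_eq_mk
  have hveq : ∀ k, Ψk k =ᵐ[μ] v k := fun k => (hΨk k).1.ae_eq_mk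
  have hφeq : Φ =ᵐ[μ] φ := hΦ.1.ae_eq_mk
  have huLp : ∀ k, MemLp (u k) P μ := fun k => (hΦk k).ae_eq (hueq k)
  have hvLp : ∀ k, MemLp (v k) P μ := fun k => (hΨk k).ae_eq (hveq k)
  have hφLp : MemLp φ P μ := hΦ.ae_eq hφeq
  have hCu : ∀ k, eLpNorm (u k) P μ ≤ C := fun k =>
    le_trans (le_of_eq (eLpNorm_congr_ae (hueq k).symm)) (hC k)
  have hv0 : Tendsto (fun k => eLpNorm (v k) P μ) atTop (𝓝 0) :=
    hΨ0.congr fun k => eLpNorm_congr_ae (hveq k)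
  -- uniform bound for v
  obtain ⟨N₀, hN₀⟩ := ENNReal.tendsto_atTop_zero.1 hv0 1 one_pos
  set B : ℝ≥0∞ := 1 + (Finset.range N₀).sup (fun k => eLpNorm (v k) P μ) with hB
  have hBtop : B < ⊤ := by
    rw [hB]
    refine ENNReal.add_lt_top.2 ⟨ENNReal.one_lt_top, ?_⟩
    refine (Finset.sup_lt_iff (by simp)).2 fun k _ => (hvLp k).2
  have hBb : ∀ k, eLpNorm (v k) P μ ≤ B := by
    intro k
    rcases lt_or_ge k N₀ with h | h
    · exact le_trans (Finset.le_sup (f := fun k => eLpNorm (v k) P μ)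
        (Finset.mem_range.2 h)) le_add_self
    · exact (hN₀ k h).trans le_self_add
  -- measurability of compositions with H
  have hHunc : Measurable (Function.uncurry fun (ξ : Eucl n) (x : α) => H x ξ) :=
    measurable_uncurry_of_continuous_of_measurable hcont hmeas
  have hHcomp : ∀ g : α → Eucl n, Measurable g → Measurable fun x => H x (g x) := fun g hg =>
    hHunc.comp (hg.prodMk measurable_id)
  -- Lᑫ bound for compositions with H
  have hHbound : ∀ g : α → Eucl n, Measurable g →
      eLpNorm (fun x => H x (g x)) q μ ≤
        ENNReal.ofReal a * eLpNorm g P μ ^ (p - 1) + eLpNorm b q μ := by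
    intro g hg
    have hmg : AEStronglyMeasurable (fun x => a * ‖g x‖ ^ (p - 1)) μ :=
      (measurable_const.mul ((Real.continuous_rpow_const hp1.le).measurable.comp hg.norm)).aestronglyMeasurable
    calc eLpNorm (fun x => H x (g x)) q μ
        ≤ eLpNorm (fun x => a * ‖g x‖ ^ (p - 1) + b x) q μ :=
          eLpNorm_mono_real fun x => hH x (g x)
      _ ≤ eLpNorm (fun x => a * ‖g x‖ ^ (p - 1)) q μ + eLpNorm b q μ :=
          eLpNorm_add_le hmg hb.1 hq1
      _ = ENNReal.ofReal a * eLpNorm (fun x => ‖g x‖ ^ (p - 1)) q μ + eLpNorm b q μ := by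
          have heq : (fun x => a * ‖g x‖ ^ (p - 1)) = a • (fun x => ‖g x‖ ^ (p - 1)) := by
            funext x; simp [smul_eq_mul]
          rw [heq, eLpNorm_const_smul, Real.enorm_eq_ofReal ha]
      _ ≤ ENNReal.ofReal a * eLpNorm g P μ ^ (p - 1) + eLpNorm b q μ := by
          rw [eLpNorm_norm_rpow g hp1]
          have hqP : q * ENNReal.ofReal (p - 1) = P := by
            rw [hqdef, hPdef, ← ENNReal.ofReal_mul (by positivity), div_mul_cancel₀ _ hp1.ne']
          rw [hqP]
  -- the difference G and its uniform Lᑫ bound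
  set G : ℕ → α → Eucl m := fun k x => H x (u k x + v k x) - H x (u k x) with hG
  have hGmeas : ∀ k, Measurable (G k) := fun k =>
    (hHcomp _ ((humeas k).add (hvmeas k))).sub (hHcomp _ (humeas k))
  set D : ℝ≥0∞ := (ENNReal.ofReal a * (C + B) ^ (p - 1) + eLpNorm b q μ) +
      (ENNReal.ofReal a * C ^ (p - 1) + eLpNorm b q μ) with hD
  have hbq : eLpNorm b q μ < ⊤ := hb.2
  have hDtop : D < ⊤ := by
    rw [hD]
    have h1 : (C + B) ^ (p - 1) < ⊤ :=
      ENNReal.rpow_lt_top_of_nonneg hp1.le (ENNReal.add_lt_top.2 ⟨hCtop, hBtop⟩).ne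
    have h2 : C ^ (p - 1) < ⊤ := ENNReal.rpow_lt_top_of_nonneg hp1.le hCtop.ne
    have h3 : ENNReal.ofReal a < ⊤ := ENNReal.ofReal_lt_top
    refine ENNReal.add_lt_top.2 ⟨ENNReal.add_lt_top.2 ⟨?_, hbq⟩, ENNReal.add_lt_top.2 ⟨?_, hbq⟩⟩
    · exact ENNReal.mul_lt_top h3 h1
    · exact ENNReal.mul_lt_top h3 h2
  have hGq : ∀ k, eLpNorm (G k) q μ ≤ D := by
    intro k
    refine le_trans (eLpNorm_sub_le ((hHcomp _ ((humeas k).add (hvmeas k))).aestronglyMeasurable)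
      ((hHcomp _ (humeas k)).aestronglyMeasurable) hq1) ?_
    rw [hD]
    refine add_le_add (le_trans (hHbound _ ((humeas k).add (hvmeas k))) ?_)
      (le_trans (hHbound _ (humeas k)) ?_)
    · refine add_le_add_left (mul_le_mul_right (ENNReal.rpow_le_rpow ?_ hp1.le) _) _
      exact (eLpNorm_add_le (huLp k).1 (hvLp k).1 hP1).trans (add_le_add (hCu k) (hBb k))
    · exact add_le_add_left (mul_le_mul_right (ENNReal.rpow_le_rpow (hCu k) hp1.le) _) _
  -- the integrand
  set f : ℕ → α → ℝ := fun k x => (inner ℝ (G k x) (φ x) : ℝ) with hf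
  have hfmeas : ∀ k, Measurable (f k) := fun k => (hGmeas k).inner hφmeas
  -- Hölder bound
  have hkey : ∀ (g : α → Eucl m), AEStronglyMeasurable g μ → ∀ (k : ℕ) (r : α → ℝ),
      (∀ x, ‖r x‖ ≤ ‖G k x‖ * ‖g x‖) → eLpNorm r 1 μ ≤ D * eLpNorm g P μ := by
    intro g hg k r hr
    have h1 : eLpNorm r 1 μ ≤ eLpNorm ((fun x => ‖G k x‖) • g) 1 μ := by
      refine eLpNorm_mono fun x => ?_
      rw [Pi.smul_apply', norm_smul, norm_norm]
      exact hr x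
    refine h1.trans ?_
    have h2 : eLpNorm ((fun x => ‖G k x‖) • g) 1 μ ≤
        eLpNorm (fun x => ‖G k x‖) q μ * eLpNorm g P μ :=
      eLpNorm_smul_le_mul_eLpNorm hg ((hGmeas k).norm.aestronglyMeasurable)
        (hpqr := ⟨by rw [inv_one, ← one_div, ← one_div, hconj]⟩)
    refine h2.trans (mul_le_mul_left ?_ _)
    rw [eLpNorm_norm]
    exact hGq k
  have hfbound : ∀ k x, ‖f k x‖ ≤ ‖G k x‖ * ‖φ x‖ := by
    intro k x
    rw [hf, Real.norm_eq_abs]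
    exact abs_real_inner_le_norm _ _
  have hfint : ∀ k, Integrable (f k) μ := by
    intro k
    rw [← memLp_one_iff_integrable]
    refine ⟨(hfmeas k).aestronglyMeasurable, ?_⟩
    exact lt_of_le_of_lt (hkey φ hφLp.1 k (f k) (hfbound k)) (ENNReal.mul_lt_top hDtop hφLp.2)
  -- uniform integrability
  have hUI : UnifIntegrable f 1 μ := by
    intro ε hε
    have hD1 : (0:ℝ) < D.toReal + 1 := by positivity
    obtain ⟨δ, hδ0, hδ⟩ := hφLp.eLpNorm_indicator_le hP1 hPtop (div_pos hε hD1)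
    refine ⟨δ, hδ0, fun i t ht hμt => ?_⟩
    have h1 : eLpNorm (t.indicator (f i)) 1 μ ≤ D * eLpNorm (t.indicator φ) P μ := by
      refine hkey _ (hφLp.1.indicator ht) i _ fun x => ?_
      by_cases hx : x ∈ t
      · rw [Set.indicator_of_mem hx, Set.indicator_of_mem hx]
        exact hfbound i x
      · simp [Set.indicator_of_notMem hx]
    refine h1.trans ?_
    calc D * eLpNorm (t.indicator φ) P μ
        ≤ ENNReal.ofReal (D.toReal + 1) * ENNReal.ofReal (ε / (D.toReal + 1)) := by
          refine mul_le_mul' ?_ (hδ t ht hμt)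
          conv_lhs => rw [← ENNReal.ofReal_toReal hDtop.ne]
          exact ENNReal.ofReal_le_ofReal (by linarith)
      _ = ENNReal.ofReal ε := by
          rw [← ENNReal.ofReal_mul (by positivity)]
          congr 1
          field_simp
  -- convergence in measure of G to 0
  have hGTIM : ∀ εr : ℝ, 0 < εr → ∀ δ : ℝ≥0∞, 0 < δ →
      ∃ N, ∀ k ≥ N, μ {x | εr ≤ ‖G k x‖} ≤ δ / 3 + (δ / 3 + δ / 3) := by
    intro εr hεr δ hδ
    have hδ3 : (0:ℝ≥0∞) < δ / 3 := ENNReal.div_pos hδ.ne' (by norm_num)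
    have hseteq : ∀ (g : α → Eucl n) (M : ℝ) (x : α),
        (M ≤ ‖g x‖) ↔ (ENNReal.ofReal M ≤ (‖g x‖₊ : ℝ≥0∞)) := by
      intro g M x
      rw [← enorm_eq_nnnorm, ← ofReal_norm]
      exact (ENNReal.ofReal_le_ofReal_iff (norm_nonneg _)).symm
    -- choose M via Chebyshev
    have hcheb : Tendsto (fun j : ℕ => ((j : ℝ≥0∞))⁻¹ ^ P.toReal * C ^ P.toReal)
        atTop (𝓝 0) := by
      have h1 : Tendsto (fun j : ℕ => ((j : ℝ≥0∞))⁻¹ ^ P.toReal) atTop (𝓝 0) := by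
        have h := (ENNReal.tendsto_inv_nat_nhds_zero).ennrpow_const P.toReal
        simpa [ENNReal.zero_rpow_of_pos hpt] using h
      have h2 := ENNReal.Tendsto.mul_const (b := C ^ P.toReal) h1
        (Or.inr (ENNReal.rpow_ne_top_of_nonneg ENNReal.toReal_nonneg hCtop.ne))
      simpa using h2
    obtain ⟨J₁, hJ₁⟩ := ENNReal.tendsto_atTop_zero.1 hcheb (δ / 3) hδ3
    set Mn : ℕ := max J₁ 1 with hMn
    set M : ℝ := (Mn : ℝ) with hM
    have hMpos : (0:ℝ) < M := by
      rw [hM]; exact_mod_cast Nat.lt_of_lt_of_le Nat.zero_lt_one (le_max_right _ _)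
    have hchebM : ∀ k, μ {x | M ≤ ‖u k x‖} ≤ δ / 3 := by
      intro k
      have h1 := meas_ge_le_mul_pow_eLpNorm_enorm μ hP0 hPtop (huLp k).1
        (ε := ENNReal.ofReal M) (ENNReal.ofReal_pos.2 hMpos).ne' (fun h => absurd h ENNReal.ofReal_ne_top)
      have hset : {x | M ≤ ‖u k x‖} = {x | ENNReal.ofReal M ≤ (‖u k x‖₊ : ℝ≥0∞)} := by
        ext x; exact hseteq (u k) M x
      rw [hset]
      refine h1.trans (le_trans ?_ (hJ₁ Mn (le_max_left _ _)))
      have hcast : ENNReal.ofReal M = (Mn : ℝ≥0∞) := by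
        rw [hM, ENNReal.ofReal_natCast]
      rw [hcast]
      exact mul_le_mul' le_rfl (ENNReal.rpow_le_rpow (hCu k) ENNReal.toReal_nonneg)
    -- oscillation control
    obtain ⟨w, hwmeas, hwdom, hwten⟩ := osc_aux μ H hmeas hcont M (ENNReal.ofReal εr)
      (ENNReal.ofReal_pos.2 hεr)
    obtain ⟨J₂, hJ₂⟩ := ENNReal.tendsto_atTop_zero.1 hwten (δ / 3) hδ3
    -- Chebyshev for v in k
    have hΨbnd : ∀ k, μ {x | 1 / ((J₂:ℝ) + 1) ≤ ‖v k x‖} ≤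
        (ENNReal.ofReal (1 / ((J₂:ℝ) + 1)))⁻¹ ^ P.toReal * eLpNorm (v k) P μ ^ P.toReal := by
      intro k
      have h1 := meas_ge_le_mul_pow_eLpNorm_enorm μ hP0 hPtop (hvLp k).1
        (ε := ENNReal.ofReal (1 / ((J₂:ℝ) + 1))) (ENNReal.ofReal_pos.2 (by positivity)).ne'
        (fun h => absurd h ENNReal.ofReal_ne_top)
      have hset : {x | 1 / ((J₂:ℝ) + 1) ≤ ‖v k x‖} =
          {x | ENNReal.ofReal (1 / ((J₂:ℝ) + 1)) ≤ (‖v k x‖₊ : ℝ≥0∞)} := by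
        ext x; exact hseteq (v k) _ x
      rw [hset]
      exact h1
    have hΨcheb : Tendsto (fun k => μ {x | 1 / ((J₂:ℝ) + 1) ≤ ‖v k x‖}) atTop (𝓝 0) := by
      have h1 : Tendsto (fun k => eLpNorm (v k) P μ ^ P.toReal) atTop (𝓝 0) := by
        have h := hv0.ennrpow_const P.toReal
        simpa [ENNReal.zero_rpow_of_pos hpt] using h
      have h2 := ENNReal.Tendsto.const_mul (a := (ENNReal.ofReal (1/((J₂:ℝ)+1)))⁻¹ ^ P.toReal) h1
        (Or.inr (ENNReal.rpow_ne_top_of_nonneg ENNReal.toReal_nonneg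
          (ENNReal.inv_ne_top.2 (ENNReal.ofReal_pos.2 (by positivity)).ne')))
      rw [mul_zero] at h2
      exact tendsto_of_tendsto_of_tendsto_of_le_of_le tendsto_const_nhds h2
        (fun k => zero_le) (fun k => hΨbnd k)
    obtain ⟨N₁, hN₁⟩ := ENNReal.tendsto_atTop_zero.1 hΨcheb (δ / 3) hδ3
    refine ⟨N₁, fun k hk => ?_⟩
    have hsub : {x | εr ≤ ‖G k x‖} ⊆ {x | M ≤ ‖u k x‖} ∪
        ({x | 1 / ((J₂:ℝ) + 1) ≤ ‖v k x‖} ∪ {x | ENNReal.ofReal εr ≤ w J₂ x}) := by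
      intro x hx
      simp only [Set.mem_setOf_eq] at hx
      by_contra hcon
      simp only [Set.mem_union, Set.mem_setOf_eq, not_or, not_le] at hcon
      obtain ⟨h1, h2, h3⟩ := hcon
      have hd := hwdom J₂ (u k x) (v k x) x h1.le h2.le
      have : ENNReal.ofReal εr ≤ w J₂ x := by
        refine le_trans ?_ hd
        rw [← enorm_eq_nnnorm, ← ofReal_norm]
        exact ENNReal.ofReal_le_ofReal hx
      exact absurd this (not_le.2 h3)
    refine le_trans (measure_mono hsub) ?_
    refine le_trans (measure_union_le _ _) ?_
    refine add_le_add (hchebM k) ?_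
    refine le_trans (measure_union_le _ _) ?_
    exact add_le_add (hN₁ k hk) (hJ₂ J₂ le_rfl)
  -- convergence in measure of f to 0
  have hTIM : TendstoInMeasure μ f atTop 0 := by
    rw [tendstoInMeasure_iff_dist]
    intro ε hε
    rw [ENNReal.tendsto_atTop_zero]
    intro δ hδ
    have hδ2 : (0:ℝ≥0∞) < δ / 2 := ENNReal.div_pos hδ.ne' (by norm_num)
    have hφsets : Tendsto (fun R : ℕ => μ {x | (R:ℝ) ≤ ‖φ x‖}) atTop (𝓝 0) := by
      have h0 : (⋂ R : ℕ, {x | (R:ℝ) ≤ ‖φ x‖}) = ∅ := by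
        ext x
        simp only [Set.mem_iInter, Set.mem_setOf_eq, Set.mem_empty_iff_false, iff_false,
          not_forall, not_le]
        obtain ⟨R, hR⟩ := exists_nat_gt ‖φ x‖
        exact ⟨R, hR⟩
      have h := tendsto_measure_iInter_atTop (μ := μ)
        (s := fun R : ℕ => {x | (R:ℝ) ≤ ‖φ x‖})
        (fun R => (measurableSet_le measurable_const hφmeas.norm).nullMeasurableSet)
        (fun R R' hRR' x hx => by
          simp only [Set.mem_setOf_eq] at hx ⊢
          exact le_trans (by exact_mod_cast hRR') hx)
        ⟨0, measure_ne_top μ _⟩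
      rw [h0, measure_empty] at h
      exact h
    obtain ⟨R₀, hR₀⟩ := ENNReal.tendsto_atTop_zero.1 hφsets (δ / 2) hδ2
    set R : ℝ := (R₀ : ℝ) + 1 with hR
    have hRpos : (0:ℝ) < R := by positivity
    obtain ⟨N, hN⟩ := hGTIM (ε / R) (div_pos hε hRpos) (δ / 2) hδ2
    refine ⟨N, fun k hk => ?_⟩
    have hsub : {x | ε ≤ dist (f k x) ((0 : α → ℝ) x)} ⊆
        {x | ((R₀:ℝ)) ≤ ‖φ x‖} ∪ {x | ε / R ≤ ‖G k x‖} := by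
      intro x hx
      simp only [Set.mem_setOf_eq, Pi.zero_apply, dist_zero_right] at hx
      by_contra hcon
      simp only [Set.mem_union, Set.mem_setOf_eq, not_or, not_le] at hcon
      obtain ⟨h1, h2⟩ := hcon
      have hφR : ‖φ x‖ < R := by rw [hR]; linarith
      have : ‖f k x‖ < ε := by
        refine lt_of_le_of_lt (hfbound k x) ?_
        calc ‖G k x‖ * ‖φ x‖ ≤ ‖G k x‖ * R := by
              exact mul_le_mul_of_nonneg_left hφR.le (norm_nonneg _)
          _ < (ε / R) * R := by
              refine mul_lt_mul_of_pos_right h2 hRpos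
          _ = ε := by field_simp
      exact absurd hx (not_le.2 this)
    refine le_trans (measure_mono hsub) ?_
    refine le_trans (measure_union_le _ _) ?_
    have h3 : δ / 2 / 3 + (δ / 2 / 3 + δ / 2 / 3) = δ / 2 := by
      rw [← add_assoc]
      exact ENNReal.add_thirds _
    calc μ {x | ((R₀:ℝ)) ≤ ‖φ x‖} + μ {x | ε / R ≤ ‖G k x‖}
        ≤ δ / 2 + (δ / 2 / 3 + (δ / 2 / 3 + δ / 2 / 3)) :=
          add_le_add (hR₀ R₀ le_rfl) (hN k hk)
      _ = δ := by rw [h3, ENNReal.add_halves]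
  -- Vitali's theorem and conclusion
  have hfaesm : ∀ k, AEStronglyMeasurable (f k) μ := fun k => (hfmeas k).aestronglyMeasurable
  have hL1 : Tendsto (fun k => eLpNorm (f k - 0) 1 μ) atTop (𝓝 0) :=
    tendsto_Lp_finite_of_tendstoInMeasure le_rfl ENNReal.one_ne_top hfaesm MemLp.zero hUI hTIM
  have hint : Tendsto (fun k => ∫ x, f k x ∂μ) atTop (𝓝 (∫ x, (0:ℝ) ∂μ)) :=
    tendsto_integral_of_L1' (0 : α → ℝ) (integrable_zero _ _ _).aestronglyMeasurable
      (Eventually.of_forall hfint) hL1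
  rw [integral_zero] at hint
  have heq : ∀ k, ∫ x, f k x ∂μ =
      ∫ x, (inner ℝ (H x (Φk k x + Ψk k x) - H x (Φk k x)) (Φ x) : ℝ) ∂μ := by
    intro k
    refine integral_congr_ae ?_
    filter_upwards [hueq k, hveq k, hφeq] with x h1 h2 h3
    simp only [hf, hG]
    rw [h1, h2, h3]
  exact hint.congr heq
end
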